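/- Let f : ℝ → ℝ be a C¹ function of period 1. Then ∫₀¹ f(x)⁴ dx ≤ C (‖f'‖_{L²[0,1]} ‖f‖_{L²[0,1]}³ + ‖f‖_{L²[0,1]}⁴) for some universal constant C > 0. -/

import Mathlib

open intervalIntegral

set_option maxHeartbeats 1600000 in
theorem stmt_9 :
    ∃ C : ℝ, 0 < C ∧ ∀ f : ℝ → ℝ, ContDiff ℝ 1 f → (∀ x : ℝ, f (x + 1) = f x) →
      (∫ x in (0:ℝ)..1, (f x) ^ 4) ≤
        C * (Real.sqrt (∫ x in (0:ℝ)..1, (deriv f x) ^ 2)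
              * (Real.sqrt (∫ x in (0:ℝ)..1, (f x) ^ 2)) ^ 3
            + (Real.sqrt (∫ x in (0:ℝ)..1, (f x) ^ 2)) ^ 4) := by
  refine ⟨2, by norm_num, ?_⟩
  intro f hf _
  have hfc : Continuous f := hf.continuous
  have hf'c : Continuous (deriv f) := hf.continuous_deriv le_rfl
  have hder : ∀ x : ℝ, HasDerivAt f (deriv f x) x := fun x =>
    ((hf.differentiable one_ne_zero) x).hasDerivAt
  set A := ∫ x in (0:ℝ)..1, (f x) ^ 2 with hAdef
  set B := ∫ x in (0:ℝ)..1, (deriv f x) ^ 2 with hBdef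
  set I := ∫ x in (0:ℝ)..1, |f x * deriv f x| with hIdef
  have hA0 : 0 ≤ A :=
    intervalIntegral.integral_nonneg (by norm_num) (fun x _ => sq_nonneg _)
  have hB0 : 0 ≤ B :=
    intervalIntegral.integral_nonneg (by norm_num) (fun x _ => sq_nonneg _)
  have hI0 : 0 ≤ I :=
    intervalIntegral.integral_nonneg (by norm_num) (fun x _ => abs_nonneg _)
  have hfint : ∀ a b : ℝ, IntervalIntegrable (fun x => (f x) ^ 2) MeasureTheory.volume a b :=
    fun a b => ((hfc.pow 2).intervalIntegrable a b)
  have hf'int : ∀ a b : ℝ, IntervalIntegrable (fun x => (deriv f x) ^ 2)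
      MeasureTheory.volume a b := fun a b => ((hf'c.pow 2).intervalIntegrable a b)
  have habsint : ∀ a b : ℝ, IntervalIntegrable (fun x => |f x * deriv f x|)
      MeasureTheory.volume a b := fun a b => ((hfc.mul hf'c).abs.intervalIntegrable a b)
  -- parametric AM-GM bound
  have key : ∀ t : ℝ, 0 < t → 2 * I ≤ t * A + t⁻¹ * B := by
    intro t ht
    have hpt : ∀ x : ℝ, 2 * |f x * deriv f x| ≤ t * (f x) ^ 2 + t⁻¹ * (deriv f x) ^ 2 := by
      intro x
      have h1 : |f x * deriv f x| = |f x| * |deriv f x| := abs_mul _ _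
      have h2 : (0:ℝ) ≤ (t * |f x| - |deriv f x|) ^ 2 := sq_nonneg _
      have h3 : (f x) ^ 2 = |f x| ^ 2 := (sq_abs _).symm
      have h4 : (deriv f x) ^ 2 = |deriv f x| ^ 2 := (sq_abs _).symm
      rw [h1, h3, h4]
      have ht' : t⁻¹ = 1 / t := by rw [one_div]
      rw [ht', div_eq_iff (ne_of_gt ht)] at *
      have := mul_pos ht ht
      nlinarith [sq_nonneg (t * |f x| - |deriv f x|), abs_nonneg (f x), abs_nonneg (deriv f x)]
    have hmono : (∫ x in (0:ℝ)..1, 2 * |f x * deriv f x|) ≤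
        ∫ x in (0:ℝ)..1, (t * (f x) ^ 2 + t⁻¹ * (deriv f x) ^ 2) := by
      apply intervalIntegral.integral_mono_on (by norm_num)
        ((habsint 0 1).const_mul 2)
        (((hfint 0 1).const_mul t).add ((hf'int 0 1).const_mul t⁻¹))
      intro x _; exact hpt x
    calc 2 * I = ∫ x in (0:ℝ)..1, 2 * |f x * deriv f x| := by
          rw [hIdef, intervalIntegral.integral_const_mul]
      _ ≤ ∫ x in (0:ℝ)..1, (t * (f x) ^ 2 + t⁻¹ * (deriv f x) ^ 2) := hmono
      _ = t * A + t⁻¹ * B := by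
          rw [intervalIntegral.integral_add ((hfint 0 1).const_mul t)
            ((hf'int 0 1).const_mul t⁻¹), intervalIntegral.integral_const_mul,
            intervalIntegral.integral_const_mul]
  -- Cauchy-Schwarz
  have CS : 2 * I ≤ 2 * Real.sqrt B * Real.sqrt A := by
    apply le_of_forall_pos_le_add
    intro ε hε
    set a := Real.sqrt A
    set b := Real.sqrt B
    have ha0 : 0 ≤ a := Real.sqrt_nonneg _
    have hb0 : 0 ≤ b := Real.sqrt_nonneg _
    have haA : A ≤ (a + ε / (2 * (a + b + 1))) ^ 2 := by
      have h1 : A = a ^ 2 := (Real.sq_sqrt hA0).symm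
      have h2 : 0 < ε / (2 * (a + b + 1)) := by positivity
      nlinarith
    have hbB : B ≤ (b + ε / (2 * (a + b + 1))) ^ 2 := by
      have h1 : B = b ^ 2 := (Real.sq_sqrt hB0).symm
      have h2 : 0 < ε / (2 * (a + b + 1)) := by positivity
      nlinarith
    set δ := min 1 (ε / (2 * (a + b + 1))) with hδdef
    have hδ0 : 0 < δ := lt_min one_pos (by positivity)
    have hδ1 : δ ≤ 1 := min_le_left _ _
    have hδ2 : δ ≤ ε / (2 * (a + b + 1)) := min_le_right _ _
    set t := (b + δ) / (a + δ) with htdef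
    have hta : 0 < a + δ := by linarith
    have htb : 0 < b + δ := by linarith
    have ht : 0 < t := div_pos htb hta
    have h1 : t * A ≤ (b + δ) * (a + δ) := by
      rw [htdef, div_mul_eq_mul_div, div_le_iff₀ hta]
      have hA' : A ≤ (a + δ) ^ 2 := by
        have : A = a ^ 2 := (Real.sq_sqrt hA0).symm
        nlinarith
      nlinarith
    have h2 : t⁻¹ * B ≤ (a + δ) * (b + δ) := by
      rw [htdef, inv_div, div_mul_eq_mul_div, div_le_iff₀ htb]
      have hB' : B ≤ (b + δ) ^ 2 := by
        have : B = b ^ 2 := (Real.sq_sqrt hB0).symm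
        nlinarith
      nlinarith
    have h3 : 2 * I ≤ t * A + t⁻¹ * B := key t ht
    have h4 : (b + δ) * (a + δ) + (a + δ) * (b + δ) = 2 * (a + δ) * (b + δ) := by ring
    have h5 : 2 * (a + δ) * (b + δ) ≤ 2 * b * a + ε := by
      have hd : δ * (2 * (a + b + 1)) ≤ ε := by
        rw [← le_div_iff₀ (by positivity)]; exact hδ2
      nlinarith
    calc 2 * I ≤ t * A + t⁻¹ * B := h3
      _ ≤ 2 * (a + δ) * (b + δ) := by linarith
      _ ≤ 2 * b * a + ε := h5
  -- pointwise bound on f² on [0,1]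
  have hMpt : ∀ x ∈ Set.Icc (0:ℝ) 1, (f x) ^ 2 ≤ A + 2 * I := by
    -- minimum point
    obtain ⟨y₀, hy₀mem, hy₀min⟩ :=
      isCompact_Icc.exists_isMinOn (Set.nonempty_Icc.2 (by norm_num : (0:ℝ) ≤ 1))
        ((hfc.pow 2).continuousOn : ContinuousOn (fun x => (f x) ^ 2) (Set.Icc 0 1))
    have hy₀A : (f y₀) ^ 2 ≤ A := by
      have h1 : (∫ _ in (0:ℝ)..1, (f y₀) ^ 2) ≤ A :=
        intervalIntegral.integral_mono_on (by norm_num)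
          (intervalIntegrable_const) (hfint 0 1) (fun x hx => hy₀min hx)
      simpa using h1
    intro x hx
    have hftc : (∫ u in y₀..x, 2 * f u * deriv f u) = (f x) ^ 2 - (f y₀) ^ 2 := by
      apply intervalIntegral.integral_eq_sub_of_hasDerivAt
      · intro u _
        have : HasDerivAt (fun x => f x ^ 2) _ u := (hder u).pow 2
        simpa [mul_comm, mul_assoc, mul_left_comm] using this
      · exact ((continuous_const.mul hfc).mul hf'c).intervalIntegrable _ _
    have habs : (∫ u in y₀..x, 2 * f u * deriv f u) ≤ 2 * I := by
      have h1 : (∫ u in y₀..x, 2 * f u * deriv f u) ≤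
          |∫ u in y₀..x, 2 * f u * deriv f u| := le_abs_self _
      have h2 : |∫ u in y₀..x, 2 * f u * deriv f u| ≤
          |∫ u in y₀..x, (|2 * f u * deriv f u|)| := by
        have := intervalIntegral.norm_integral_le_abs_integral_norm
            (f := fun u => 2 * f u * deriv f u) (a := y₀) (b := x)
            (μ := MeasureTheory.volume)
        simp only [Real.norm_eq_abs] at this
        exact this
      have h3 : |∫ u in y₀..x, (|2 * f u * deriv f u|)| ≤
          |∫ u in (0:ℝ)..1, (|2 * f u * deriv f u|)| := by
        apply intervalIntegral.abs_integral_mono_interval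
        · apply Set.uIoc_subset_uIoc_of_uIcc_subset_uIcc
          rw [Set.uIcc_subset_uIcc_iff_mem]
          constructor
          · rw [Set.uIcc_of_le (by norm_num : (0:ℝ) ≤ 1)]; exact hy₀mem
          · rw [Set.uIcc_of_le (by norm_num : (0:ℝ) ≤ 1)]; exact hx
        · exact Filter.Eventually.of_forall (fun u => abs_nonneg _)
        · exact ((continuous_const.mul hfc).mul hf'c).abs.intervalIntegrable _ _
      have h4 : (∫ u in (0:ℝ)..1, |2 * f u * deriv f u|) = 2 * I := by
        rw [hIdef, ← intervalIntegral.integral_const_mul]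
        apply intervalIntegral.integral_congr
        intro u _
        simp only [mul_assoc, abs_mul, abs_two]
      have h5 : |∫ u in (0:ℝ)..1, (|2 * f u * deriv f u|)| = 2 * I := by
        rw [h4]; exact abs_of_nonneg (by linarith)
      linarith
    linarith [hftc, habs, hy₀A]
  -- conclude
  have hfinal : (∫ x in (0:ℝ)..1, (f x) ^ 4) ≤ (A + 2 * I) * A := by
    have h1 : (∫ x in (0:ℝ)..1, (f x) ^ 4) ≤
        ∫ x in (0:ℝ)..1, (A + 2 * I) * (f x) ^ 2 := by
      apply intervalIntegral.integral_mono_on (by norm_num)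
        ((hfc.pow 4).intervalIntegrable 0 1) ((hfint 0 1).const_mul _)
      intro x hx
      have h2 := hMpt x hx
      show f x ^ 4 ≤ (A + 2 * I) * f x ^ 2
      nlinarith [sq_nonneg (f x)]
    calc (∫ x in (0:ℝ)..1, (f x) ^ 4) ≤
        ∫ x in (0:ℝ)..1, (A + 2 * I) * (f x) ^ 2 := h1
      _ = (A + 2 * I) * A := by rw [intervalIntegral.integral_const_mul]
  have hsa : Real.sqrt A ^ 2 = A := Real.sq_sqrt hA0
  have hsb0 : 0 ≤ Real.sqrt B := Real.sqrt_nonneg _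
  have hsa0 : 0 ≤ Real.sqrt A := Real.sqrt_nonneg _
  calc (∫ x in (0:ℝ)..1, (f x) ^ 4) ≤ (A + 2 * I) * A := hfinal
    _ ≤ (A + 2 * Real.sqrt B * Real.sqrt A) * A := by nlinarith [CS, hA0]
    _ ≤ 2 * (Real.sqrt B * Real.sqrt A ^ 3 + Real.sqrt A ^ 4) := by
        have hA4 : Real.sqrt A ^ 4 = A * A := by
          rw [show (4:ℕ) = 2 * 2 from rfl, pow_mul, hsa]; ring
        have hA3 : Real.sqrt B * Real.sqrt A ^ 3 = Real.sqrt B * Real.sqrt A * A := by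
          rw [show (3:ℕ) = 2 + 1 from rfl, pow_succ, hsa]; ring
        nlinarith [hA4, hA3, mul_nonneg hsb0 (pow_nonneg hsa0 3), pow_nonneg hsa0 4]
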